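/- arXiv:2601.10523 — 2 statements merged into one kernel-verified Lean document; each statement's English description precedes it below -/
import Mathlib

section
/- Let Ω ⊂ ℤⁿ be finite with Dirichlet Schrödinger eigendata as above, g a coordinate function, and φ_i = g u_i − Σ_j a_{ij} u_j the projected trial function. Then −2 Σ_{x∈Ω} φ_i(x) Γ(g,u_i)(x) d_x = −2 Σ_{x∈Ω} g(x) u_i(x) Γ(g,u_i)(x) d_x + Σ_{j=1}^k (λ_i − λ_j) a_{ij}², and this quantity is nonnegative. -/
open Finset

/-- Adjacency indicator on the integer lattice `ℤⁿ`: `μ x y = 1` iff `x` and `y`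
are at `ℓ¹`-distance `1`. -/
def mu (n : ℕ) (x y : Fin n → ℤ) : ℝ :=
  if (∑ i, |x i - y i|) = 1 then 1 else 0

/-- Every vertex of `ℤⁿ` has degree `2n`. -/
def deg (n : ℕ) : ℝ := 2 * n

/-- The normalized Laplacian on `ℤⁿ`: `Δf(x) = (1/(2n)) ∑_{y∼x} (f(y) - f(x))`. -/
noncomputable def lap (n : ℕ) (f : (Fin n → ℤ) → ℝ) (x : Fin n → ℤ) : ℝ :=
  (1 / deg n) * ∑ᶠ y, mu n x y * (f y - f x)

/-- The carré du champ operator on `ℤⁿ`: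
`Γ(f,g)(x) = (1/(2 d_x)) ∑_y μ_{xy} (f(y)-f(x))(g(y)-g(x))`. -/
noncomputable def gam (n : ℕ) (f g : (Fin n → ℤ) → ℝ) (x : Fin n → ℤ) : ℝ :=
  (1 / (2 * deg n)) * ∑ᶠ y, mu n x y * (f y - f x) * (g y - g x)

/-- The `α`-th coordinate function on `ℤⁿ`. -/
def coord {n : ℕ} (α : Fin n) (x : Fin n → ℤ) : ℝ := x α

/-- The coefficient `aᵢⱼ = ∑_x g uᵢ uⱼ ρ d_x` for the coordinate function `g = x_α`. -/
noncomputable def aCoef (n : ℕ) (Ω : Finset (Fin n → ℤ)) (ρ : (Fin n → ℤ) → ℝ)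
    (u : ℕ → (Fin n → ℤ) → ℝ) (α : Fin n) (i j : ℕ) : ℝ :=
  ∑ x ∈ Ω, coord α x * u i x * u j x * ρ x * deg n

/-- The coefficient `bᵢⱼ = ∑_x uⱼ Γ(g,uᵢ) d_x` for the coordinate function `g = x_α`. -/
noncomputable def bCoef (n : ℕ) (Ω : Finset (Fin n → ℤ)) (u : ℕ → (Fin n → ℤ) → ℝ)
    (α : Fin n) (i j : ℕ) : ℝ :=
  ∑ x ∈ Ω, u j x * gam n (coord α) (u i) x * deg n

/-- The projected trial function `φᵢ = g uᵢ - ∑_{j=1}^k aᵢⱼ uⱼ`. -/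
noncomputable def phi (n : ℕ) (Ω : Finset (Fin n → ℤ)) (ρ : (Fin n → ℤ) → ℝ)
    (u : ℕ → (Fin n → ℤ) → ℝ) (α : Fin n) (k i : ℕ) (x : Fin n → ℤ) : ℝ :=
  coord α x * u i x - ∑ j ∈ Finset.Icc 1 k, aCoef n Ω ρ u α i j * u j x


/-- finite set containing all neighbors of `x` -/
noncomputable def nbhd (n : ℕ) (x : Fin n → ℤ) : Finset (Fin n → ℤ) :=
  Finset.image (fun v => x + v) (Fintype.piFinset fun _ => ({-1,0,1} : Finset ℤ))

lemma mu_symm (n : ℕ) (x y : Fin n → ℤ) : mu n x y = mu n y x := by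
  unfold mu
  simp only [abs_sub_comm]

lemma mu_eq_zero (n : ℕ) {x y : Fin n → ℤ} (h : y ∉ nbhd n x) : mu n x y = 0 := by
  unfold mu
  rw [if_neg]
  intro hsum
  apply h
  rw [nbhd, Finset.mem_image]
  refine ⟨y - x, ?_, by ring⟩
  rw [Fintype.mem_piFinset]
  intro i
  have h1 : |x i - y i| ≤ 1 := by
    rw [← hsum]
    exact Finset.single_le_sum (f := fun i => |x i - y i|) (fun j _ => abs_nonneg _) (Finset.mem_univ i)
  have := abs_le.mp h1
  simp only [Finset.mem_insert, Finset.mem_singleton, Pi.sub_apply]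
  omega

lemma finsum_mu (n : ℕ) (x : Fin n → ℤ) (F : (Fin n → ℤ) → ℝ) :
    ∑ᶠ y, mu n x y * F y = ∑ y ∈ nbhd n x, mu n x y * F y := by
  apply finsum_eq_finset_sum_of_support_subset
  intro y hy
  by_contra hmem
  exact hy (by simp [mu_eq_zero n hmem])

def refl' (n : ℕ) (x : Fin n → ℤ) : (Fin n → ℤ) ≃ (Fin n → ℤ) where
  toFun y := 2 • x - y
  invFun y := 2 • x - y
  left_inv y := by ext i; simp
  right_inv y := by ext i; simp

lemma lap_coord (n : ℕ) (α : Fin n) (x : Fin n → ℤ) : lap n (coord α) x = 0 := by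
  unfold lap
  set S := ∑ᶠ y, mu n x y * (coord α y - coord α x) with hS
  have h2 : ∀ y, mu n x (refl' n x y) * (coord α (refl' n x y) - coord α x)
      = -(mu n x y * (coord α y - coord α x)) := by
    intro y
    have hm : mu n x (refl' n x y) = mu n x y := by
      unfold mu refl'
      have : ∀ i, |x i - (2 • x - y) i| = |x i - y i| := by
        intro i
        have h : x i - (2 • x - y) i = -(x i - y i) := by
          simp only [Pi.sub_apply, Pi.smul_apply, two_nsmul, Pi.add_apply]; ring
        rw [h, abs_neg]
      simp only [Equiv.coe_fn_mk, this]
    have hc : coord α (refl' n x y) - coord α x = -(coord α y - coord α x) := by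
      have h : (2 • x - y) α = 2 * x α - y α := by
        simp only [Pi.sub_apply, Pi.smul_apply, two_nsmul, Pi.add_apply]; ring
      unfold coord refl'
      simp only [Equiv.coe_fn_mk, h]
      push_cast
      ring
    rw [hm, hc]; ring
  have h3 : S = -S := by
    rw [hS]
    nth_rewrite 1 [← finsum_comp_equiv (refl' n x)]
    simp_rw [h2]
    exact finsum_neg_distrib _
  have : S = 0 := by linarith
  rw [this, mul_zero]

lemma lap_fin (n : ℕ) (f : (Fin n → ℤ) → ℝ) (x : Fin n → ℤ) :
    lap n f x = (1 / deg n) * ∑ y ∈ nbhd n x, mu n x y * (f y - f x) := by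
  rw [lap, finsum_mu]

lemma gam_fin (n : ℕ) (f g : (Fin n → ℤ) → ℝ) (x : Fin n → ℤ) :
    gam n f g x = (1 / (2 * deg n)) * ∑ y ∈ nbhd n x, mu n x y * ((f y - f x) * (g y - g x)) := by
  rw [gam]
  congr 1
  simp_rw [mul_assoc]
  exact finsum_mu n x _

/-- product rule -/
lemma lap_mul (n : ℕ) (f h : (Fin n → ℤ) → ℝ) (x : Fin n → ℤ) :
    lap n (fun y => f y * h y) x
      = 2 * gam n f h x + f x * lap n h x + h x * lap n f x := by
  rw [lap_fin, lap_fin, lap_fin, gam_fin]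
  have hsum : ∑ y ∈ nbhd n x, mu n x y * (f y * h y - f x * h x)
      = ∑ y ∈ nbhd n x, (mu n x y * ((f y - f x) * (h y - h x))
          + (f x * (mu n x y * (h y - h x)) + h x * (mu n x y * (f y - f x)))) := by
    apply Finset.sum_congr rfl
    intro y _
    ring
  rw [hsum, Finset.sum_add_distrib, Finset.sum_add_distrib, ← Finset.mul_sum, ← Finset.mul_sum]
  have hd : deg n ≠ 0 ∨ True := Or.inr trivial
  field_simp
  ring

lemma two_gam (n : ℕ) (α : Fin n) (h : (Fin n → ℤ) → ℝ) (x : Fin n → ℤ) :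
    2 * gam n (coord α) h x
      = lap n (fun y => coord α y * h y) x - coord α x * lap n h x := by
  have := lap_mul n (coord α) h x
  rw [lap_coord] at this
  linarith

/-- Green's identity / summation by parts -/
lemma green (n : ℕ) (Ω : Finset (Fin n → ℤ)) (f h : (Fin n → ℤ) → ℝ)
    (hf : ∀ x ∉ Ω, f x = 0) (hh : ∀ x ∉ Ω, h x = 0) :
    ∑ x ∈ Ω, f x * lap n h x = ∑ x ∈ Ω, h x * lap n f x := by
  classical
  set big := Ω ∪ Ω.biUnion (nbhd n) with hbig
  have hsub : Ω ⊆ big := Finset.subset_union_left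
  have hnb : ∀ x ∈ Ω, nbhd n x ⊆ big := by
    intro x hx
    exact (Finset.subset_biUnion_of_mem (nbhd n) hx).trans Finset.subset_union_right
  have key : ∀ (f h : (Fin n → ℤ) → ℝ), (∀ x ∉ Ω, f x = 0) →
      ∑ x ∈ Ω, f x * lap n h x
        = (1 / deg n) * ∑ x ∈ big, ∑ y ∈ big, f x * (mu n x y * (h y - h x)) := by
    intro f h hf
    have step1 : ∀ x ∈ Ω, f x * lap n h x
        = (1 / deg n) * ∑ y ∈ big, f x * (mu n x y * (h y - h x)) := by
      intro x hx
      have e1 : ∑ y ∈ big, f x * (mu n x y * (h y - h x))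
          = ∑ y ∈ nbhd n x, f x * (mu n x y * (h y - h x)) :=
        (Finset.sum_subset (hnb x hx) (fun y _ hy => by rw [mu_eq_zero n hy]; ring)).symm
      rw [e1, lap_fin, Finset.mul_sum, Finset.mul_sum, Finset.mul_sum]
      exact Finset.sum_congr rfl (fun y _ => by ring)
    rw [Finset.sum_congr rfl step1, ← Finset.mul_sum]
    congr 1
    apply Finset.sum_subset hsub
    intro x _ hx
    simp [hf x hx]
  rw [key f h hf, key h f hh]
  congr 1
  have swap : ∑ x ∈ big, ∑ y ∈ big, h x * (mu n x y * (f y - f x))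
      = ∑ x ∈ big, ∑ y ∈ big, h y * (mu n x y * (f x - f y)) := by
    rw [Finset.sum_comm]
    apply Finset.sum_congr rfl; intro x _
    apply Finset.sum_congr rfl; intro y _
    rw [mu_symm]
  rw [swap]
  rw [← sub_eq_zero, ← Finset.sum_sub_distrib]
  simp_rw [← Finset.sum_sub_distrib]
  have : ∀ x ∈ big, ∀ y ∈ big,
      f x * (mu n x y * (h y - h x)) - h y * (mu n x y * (f x - f y))
      = (mu n x y * f x * h y - mu n x y * f x * h x)
        - (mu n x y * f x * h y - mu n x y * f y * h y) := by
    intro x _ y _; ring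
  calc ∑ x ∈ big, ∑ y ∈ big, (f x * (mu n x y * (h y - h x)) - h y * (mu n x y * (f x - f y)))
      = ∑ x ∈ big, ∑ y ∈ big, (mu n x y * f x * h x - mu n x y * f y * h y) * (-1) := by
        apply Finset.sum_congr rfl; intro x _
        apply Finset.sum_congr rfl; intro y _
        ring
    _ = (∑ x ∈ big, ∑ y ∈ big, (mu n x y * f x * h x - mu n x y * f y * h y)) * (-1) := by
        rw [Finset.sum_mul]
        exact Finset.sum_congr rfl fun x _ => by rw [Finset.sum_mul]
    _ = 0 := by
        have hAB : ∑ x ∈ big, ∑ y ∈ big, mu n x y * f y * h y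
            = ∑ x ∈ big, ∑ y ∈ big, mu n x y * f x * h x := by
          rw [Finset.sum_comm]
          exact Finset.sum_congr rfl fun x _ => Finset.sum_congr rfl fun y _ => by rw [mu_symm]
        simp_rw [Finset.sum_sub_distrib]
        rw [hAB, sub_self, zero_mul]

lemma kernel (n : ℕ) (hn : 0 < n) (Ω : Finset (Fin n → ℤ)) (ρ : (Fin n → ℤ) → ℝ)
    (hρ : ∀ x ∈ Ω, 0 < ρ x) (u : ℕ → (Fin n → ℤ) → ℝ)
    (horth : ∀ i ∈ Finset.Icc 1 Ω.card, ∀ j ∈ Finset.Icc 1 Ω.card,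
      ∑ x ∈ Ω, u i x * u j x * ρ x * deg n = if i = j then 1 else 0) :
    ∀ x ∈ Ω, ∀ y ∈ Ω,
      ∑ m ∈ Finset.Icc 1 Ω.card, u m x * u m y * (ρ y * deg n) = if x = y then 1 else 0 := by
  classical
  set N := Ω.card with hN
  have hdeg : (0:ℝ) < deg n := by unfold deg; positivity
  set e := Ω.equivFin with he
  set s : (Fin n → ℤ) → ℝ := fun z => Real.sqrt (ρ z * deg n) with hs
  have hs2 : ∀ z ∈ Ω, s z * s z = ρ z * deg n := fun z hz =>
    Real.mul_self_sqrt (le_of_lt (mul_pos (hρ z hz) hdeg))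
  have hspos : ∀ z ∈ Ω, 0 < s z := fun z hz =>
    Real.sqrt_pos.mpr (mul_pos (hρ z hz) hdeg)
  set M : Matrix (Fin N) (Fin N) ℝ :=
    fun m p => u (m + 1) (e.symm p : Fin n → ℤ) * s (e.symm p : Fin n → ℤ) with hM
  -- reindexing
  have reidx : ∀ G : (Fin n → ℤ) → ℝ, ∑ p : Fin N, G (e.symm p : Fin n → ℤ) = ∑ x ∈ Ω, G x := by
    intro G
    rw [Equiv.sum_comp e.symm (fun z : {x // x ∈ Ω} => G z)]
    exact Finset.sum_coe_sort Ω G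
  have hmem : ∀ a : Fin N, (a : ℕ) + 1 ∈ Finset.Icc 1 N := by
    intro a; simp [Nat.succ_le_of_lt a.isLt]
  have hMMt : M * M.transpose = 1 := by
    ext a b
    rw [Matrix.mul_apply]
    simp only [Matrix.transpose_apply]
    simp only [hM]
    have : ∀ p : Fin N, u (a+1) (e.symm p : Fin n → ℤ) * s (e.symm p : Fin n → ℤ)
          * (u (b+1) (e.symm p : Fin n → ℤ) * s (e.symm p : Fin n → ℤ))
        = (fun z => u (a+1) z * u (b+1) z * ρ z * deg n) (e.symm p : Fin n → ℤ) := by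
      intro p
      have hz : (e.symm p : Fin n → ℤ) ∈ Ω := (e.symm p).2
      simp only
      rw [show ∀ A B C : ℝ, A * C * (B * C) = A * B * (C * C) from fun A B C => by ring,
        hs2 _ hz]
      ring
    rw [Finset.sum_congr rfl (fun p _ => this p),
      reidx (fun z => u (↑a + 1) z * u (↑b + 1) z * ρ z * deg n)]
    rw [horth _ (hmem a) _ (hmem b)]
    rw [Matrix.one_apply]
    congr 1
    simp [Fin.val_inj]
  have hMtM : M.transpose * M = 1 := mul_eq_one_comm.mp hMMt
  intro x hx y hy
  have key := congrFun (congrFun hMtM (e ⟨x, hx⟩)) (e ⟨y, hy⟩)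
  rw [Matrix.mul_apply] at key
  simp only [Matrix.transpose_apply] at key
  simp only [hM, Equiv.symm_apply_apply] at key
  rw [Matrix.one_apply] at key
  have hiff : (e ⟨x, hx⟩ = e ⟨y, hy⟩) ↔ (x = y) := by
    rw [Equiv.apply_eq_iff_eq]
    exact ⟨fun h => congrArg Subtype.val h, fun h => Subtype.ext h⟩
  rw [if_congr hiff rfl rfl] at key
  have key2 : (∑ a : Fin N, u (a+1) x * u (a+1) y) * (s x * s y)
      = if x = y then 1 else 0 := by
    rw [Finset.sum_mul, ← key]
    apply Finset.sum_congr rfl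
    intro a _
    ring
  -- convert Icc sum to Fin sum
  have hconv : ∑ m ∈ Finset.Icc 1 N, u m x * u m y * (ρ y * deg n)
      = (∑ a : Fin N, u (a+1) x * u (a+1) y) * (ρ y * deg n) := by
    rw [Finset.sum_mul, ← Finset.Ico_add_one_right_eq_Icc, Finset.sum_Ico_eq_sum_range, Nat.add_sub_cancel]
    rw [← Fin.sum_univ_eq_sum_range (fun i => u (1+i) x * u (1+i) y * (ρ y * deg n)) N]
    apply Finset.sum_congr rfl
    intro a _
    rw [Nat.add_comm 1 (a : ℕ)]
  by_cases hxy : x = y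
  · subst hxy
    rw [if_pos rfl] at key2
    rw [if_pos rfl, hconv, ← hs2 x hx]
    exact key2
  · rw [if_neg hxy] at key2
    rw [if_neg hxy, hconv]
    have hsum0 : (∑ a : Fin N, u (a+1) x * u (a+1) y) = 0 := by
      have hne : s x * s y ≠ 0 := ne_of_gt (mul_pos (hspos x hx) (hspos y hy))
      exact (mul_eq_zero.mp key2).resolve_right hne
    rw [hsum0, zero_mul]

lemma expand (n : ℕ) (hn : 0 < n) (Ω : Finset (Fin n → ℤ)) (ρ : (Fin n → ℤ) → ℝ)
    (hρ : ∀ x ∈ Ω, 0 < ρ x) (u : ℕ → (Fin n → ℤ) → ℝ)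
    (horth : ∀ i ∈ Finset.Icc 1 Ω.card, ∀ j ∈ Finset.Icc 1 Ω.card,
      ∑ x ∈ Ω, u i x * u j x * ρ x * deg n = if i = j then 1 else 0)
    (f : (Fin n → ℤ) → ℝ) (x : Fin n → ℤ) (hx : x ∈ Ω) :
    f x = ∑ m ∈ Finset.Icc 1 Ω.card, (∑ y ∈ Ω, f y * u m y * ρ y * deg n) * u m x := by
  classical
  have hker := kernel n hn Ω ρ hρ u horth
  calc f x = ∑ y ∈ Ω, (if x = y then f y else 0) := by
        rw [Finset.sum_ite_eq Ω x f, if_pos hx]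
    _ = ∑ y ∈ Ω, f y * ∑ m ∈ Finset.Icc 1 Ω.card, u m x * u m y * (ρ y * deg n) := by
        apply Finset.sum_congr rfl
        intro y hy
        rw [hker x hx y hy]
        by_cases h : x = y <;> simp [h]
    _ = ∑ y ∈ Ω, ∑ m ∈ Finset.Icc 1 Ω.card, f y * (u m x * u m y * (ρ y * deg n)) := by
        apply Finset.sum_congr rfl
        intro y _
        rw [Finset.mul_sum]
    _ = ∑ m ∈ Finset.Icc 1 Ω.card, ∑ y ∈ Ω, f y * (u m x * u m y * (ρ y * deg n)) :=
        Finset.sum_comm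
    _ = ∑ m ∈ Finset.Icc 1 Ω.card, (∑ y ∈ Ω, f y * u m y * ρ y * deg n) * u m x := by
        apply Finset.sum_congr rfl
        intro m _
        rw [Finset.sum_mul]
        apply Finset.sum_congr rfl
        intro y _
        ring


/-- The identity
`-2 ∑ φᵢ Γ(g,uᵢ) d_x = -2 ∑ g uᵢ Γ(g,uᵢ) d_x + ∑ⱼ (λᵢ - λⱼ) aᵢⱼ²`,
and this quantity is nonnegative. -/
theorem phi_gamma_identity_and_nonneg (n : ℕ) (hn : 0 < n) (Ω : Finset (Fin n → ℤ)) (hne : Ω.Nonempty)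
    (V ρ : (Fin n → ℤ) → ℝ)
    (hV : ∀ x ∈ Ω, 0 ≤ V x) (hρ : ∀ x ∈ Ω, 0 < ρ x)
    (lam : ℕ → ℝ) (u : ℕ → (Fin n → ℤ) → ℝ)
    (hu0 : ∀ i ∈ Finset.Icc 1 Ω.card, ∀ x ∉ Ω, u i x = 0)
    (heig : ∀ i ∈ Finset.Icc 1 Ω.card, ∀ x ∈ Ω,
      -(lap n (u i) x) + V x * u i x = lam i * ρ x * u i x)
    (horth : ∀ i ∈ Finset.Icc 1 Ω.card, ∀ j ∈ Finset.Icc 1 Ω.card,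
      ∑ x ∈ Ω, u i x * u j x * ρ x * deg n = if i = j then 1 else 0)
    (hmono : ∀ i j : ℕ, 1 ≤ i → i ≤ j → j ≤ Ω.card → lam i ≤ lam j)
    (hpos : 0 < lam 1)
    (k : ℕ) (hk1 : 1 ≤ k) (hk2 : k ≤ Ω.card - 1)
    (α : Fin n) (i : ℕ) (hi1 : 1 ≤ i) (hik : i ≤ k) :
    (-2 * ∑ x ∈ Ω, phi n Ω ρ u α k i x * gam n (coord α) (u i) x * deg n
        = -2 * ∑ x ∈ Ω, coord α x * u i x * gam n (coord α) (u i) x * deg n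
          + ∑ j ∈ Finset.Icc 1 k, (lam i - lam j) * (aCoef n Ω ρ u α i j) ^ 2)
    ∧ 0 ≤ -2 * ∑ x ∈ Ω, phi n Ω ρ u α k i x * gam n (coord α) (u i) x * deg n := by
  classical
  set N := Ω.card with hN
  have hN1 : 1 ≤ N := Finset.card_pos.mpr hne
  have hkN : k ≤ N - 1 := hk2
  have hiN : i ∈ Finset.Icc 1 N := by rw [Finset.mem_Icc]; omega
  have hsubk : ∀ j ∈ Finset.Icc 1 k, j ∈ Finset.Icc 1 N := by
    intro j hj; rw [Finset.mem_Icc] at *; omega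
  -- the key b-formula: 2 b_{i'j} = (λ_{i'} - λ_j) a_{i'j}
  have hb : ∀ i' ∈ Finset.Icc 1 N, ∀ j ∈ Finset.Icc 1 N,
      2 * bCoef n Ω u α i' j = (lam i' - lam j) * aCoef n Ω ρ u α i' j := by
    intro i' hi' j hj
    have hlapj : ∀ x ∈ Ω, lap n (u j) x = V x * u j x - lam j * ρ x * u j x := by
      intro x hx; have := heig j hj x hx; linarith
    have hlapi : ∀ x ∈ Ω, lap n (u i') x = V x * u i' x - lam i' * ρ x * u i' x := by
      intro x hx; have := heig i' hi' x hx; linarith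
    have hgreen : ∑ x ∈ Ω, u j x * lap n (fun y => coord α y * u i' y) x
        = ∑ x ∈ Ω, (coord α x * u i' x) * lap n (u j) x :=
      green n Ω (u j) _ (hu0 j hj) (fun x hx => by rw [hu0 i' hi' x hx, mul_zero])
    have two_b : 2 * bCoef n Ω u α i' j
        = ∑ x ∈ Ω, (u j x * lap n (fun y => coord α y * u i' y) x
            - u j x * (coord α x * lap n (u i') x)) * deg n := by
      rw [bCoef, Finset.mul_sum]
      apply Finset.sum_congr rfl
      intro x _
      linear_combination (u j x * deg n) * two_gam n α (u i') x
    rw [two_b]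
    have split : ∑ x ∈ Ω, (u j x * lap n (fun y => coord α y * u i' y) x
            - u j x * (coord α x * lap n (u i') x)) * deg n
        = (∑ x ∈ Ω, u j x * lap n (fun y => coord α y * u i' y) x) * deg n
          - (∑ x ∈ Ω, u j x * (coord α x * lap n (u i') x)) * deg n := by
      calc ∑ x ∈ Ω, (u j x * lap n (fun y => coord α y * u i' y) x
              - u j x * (coord α x * lap n (u i') x)) * deg n
          = ∑ x ∈ Ω, (u j x * lap n (fun y => coord α y * u i' y) x * deg n
              - u j x * (coord α x * lap n (u i') x) * deg n) :=
            Finset.sum_congr rfl fun x _ => by ring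
        _ = ∑ x ∈ Ω, u j x * lap n (fun y => coord α y * u i' y) x * deg n
            - ∑ x ∈ Ω, u j x * (coord α x * lap n (u i') x) * deg n := Finset.sum_sub_distrib _ _
        _ = (∑ x ∈ Ω, u j x * lap n (fun y => coord α y * u i' y) x) * deg n
            - (∑ x ∈ Ω, u j x * (coord α x * lap n (u i') x)) * deg n := by
            rw [Finset.sum_mul, Finset.sum_mul]
    rw [split, hgreen]
    have e1 : ∑ x ∈ Ω, (coord α x * u i' x) * lap n (u j) x
        = ∑ x ∈ Ω, (coord α x * u i' x) * (V x * u j x - lam j * ρ x * u j x) :=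
      Finset.sum_congr rfl fun x hx => by rw [hlapj x hx]
    have e2 : ∑ x ∈ Ω, u j x * (coord α x * lap n (u i') x)
        = ∑ x ∈ Ω, u j x * (coord α x * (V x * u i' x - lam i' * ρ x * u i' x)) :=
      Finset.sum_congr rfl fun x hx => by rw [hlapi x hx]
    rw [e1, e2, aCoef, Finset.mul_sum, Finset.sum_mul, Finset.sum_mul,
      ← Finset.sum_sub_distrib]
    apply Finset.sum_congr rfl
    intro x _
    ring
  -- coefficients of the expansion of φ
  set c : ℕ → ℝ := fun m => ∑ y ∈ Ω, phi n Ω ρ u α k i y * u m y * ρ y * deg n with hcdef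
  have hexp : ∀ x ∈ Ω, phi n Ω ρ u α k i x = ∑ m ∈ Finset.Icc 1 N, c m * u m x :=
    fun x hx => expand n hn Ω ρ hρ u horth _ x hx
  set S := ∑ x ∈ Ω, phi n Ω ρ u α k i x * gam n (coord α) (u i) x * deg n with hSdef
  have hS : S = ∑ m ∈ Finset.Icc 1 N, c m * bCoef n Ω u α i m := by
    rw [hSdef]
    calc ∑ x ∈ Ω, phi n Ω ρ u α k i x * gam n (coord α) (u i) x * deg n
        = ∑ x ∈ Ω, (∑ m ∈ Finset.Icc 1 N, c m * u m x) * gam n (coord α) (u i) x * deg n :=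
          Finset.sum_congr rfl fun x hx => by rw [hexp x hx]
      _ = ∑ x ∈ Ω, ∑ m ∈ Finset.Icc 1 N,
            c m * (u m x * gam n (coord α) (u i) x * deg n) := by
          apply Finset.sum_congr rfl
          intro x _
          rw [Finset.sum_mul, Finset.sum_mul]
          apply Finset.sum_congr rfl
          intro m _
          ring
      _ = ∑ m ∈ Finset.Icc 1 N, ∑ x ∈ Ω,
            c m * (u m x * gam n (coord α) (u i) x * deg n) := Finset.sum_comm
      _ = ∑ m ∈ Finset.Icc 1 N, c m * bCoef n Ω u α i m := by
          apply Finset.sum_congr rfl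
          intro m _
          rw [bCoef, Finset.mul_sum]
  -- computation of the coefficients
  have hc : ∀ m ∈ Finset.Icc 1 N,
      c m = aCoef n Ω ρ u α i m - (if m ∈ Finset.Icc 1 k then aCoef n Ω ρ u α i m else 0) := by
    intro m hm
    rw [hcdef]
    simp only [phi]
    calc ∑ y ∈ Ω, (coord α y * u i y - ∑ j ∈ Finset.Icc 1 k, aCoef n Ω ρ u α i j * u j y)
            * u m y * ρ y * deg n
        = ∑ y ∈ Ω, (coord α y * u i y * u m y * ρ y * deg n
            - ∑ j ∈ Finset.Icc 1 k, aCoef n Ω ρ u α i j * (u j y * u m y * ρ y * deg n)) := by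
          apply Finset.sum_congr rfl
          intro y _
          rw [sub_mul, sub_mul, sub_mul, Finset.sum_mul, Finset.sum_mul, Finset.sum_mul]
          congr 1
          apply Finset.sum_congr rfl
          intro j _
          ring
      _ = aCoef n Ω ρ u α i m
          - ∑ y ∈ Ω, ∑ j ∈ Finset.Icc 1 k, aCoef n Ω ρ u α i j * (u j y * u m y * ρ y * deg n) := by
          rw [Finset.sum_sub_distrib]
          rfl
      _ = aCoef n Ω ρ u α i m
          - ∑ j ∈ Finset.Icc 1 k, aCoef n Ω ρ u α i j * ∑ y ∈ Ω, u j y * u m y * ρ y * deg n := by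
          rw [Finset.sum_comm]
          congr 1
          apply Finset.sum_congr rfl
          intro j _
          rw [Finset.mul_sum]
      _ = aCoef n Ω ρ u α i m
          - (if m ∈ Finset.Icc 1 k then aCoef n Ω ρ u α i m else 0) := by
          congr 1
          calc ∑ j ∈ Finset.Icc 1 k, aCoef n Ω ρ u α i j * ∑ y ∈ Ω, u j y * u m y * ρ y * deg n
              = ∑ j ∈ Finset.Icc 1 k, (if j = m then aCoef n Ω ρ u α i j else 0) := by
                apply Finset.sum_congr rfl
                intro j hj
                rw [horth j (hsubk j hj) m hm]
                by_cases h : j = m <;> simp [h]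
            _ = if m ∈ Finset.Icc 1 k then aCoef n Ω ρ u α i m else 0 :=
                Finset.sum_ite_eq' (Finset.Icc 1 k) m (fun j => aCoef n Ω ρ u α i j)
  -- identity part
  have hSplit : S = ∑ x ∈ Ω, coord α x * u i x * gam n (coord α) (u i) x * deg n
      - ∑ j ∈ Finset.Icc 1 k, aCoef n Ω ρ u α i j * bCoef n Ω u α i j := by
    rw [hSdef]
    simp only [phi]
    calc ∑ x ∈ Ω, (coord α x * u i x - ∑ j ∈ Finset.Icc 1 k, aCoef n Ω ρ u α i j * u j x)
            * gam n (coord α) (u i) x * deg n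
        = ∑ x ∈ Ω, (coord α x * u i x * gam n (coord α) (u i) x * deg n
            - ∑ j ∈ Finset.Icc 1 k, aCoef n Ω ρ u α i j
                * (u j x * gam n (coord α) (u i) x * deg n)) := by
          apply Finset.sum_congr rfl
          intro x _
          rw [sub_mul, sub_mul, Finset.sum_mul, Finset.sum_mul]
          congr 1
          apply Finset.sum_congr rfl
          intro j _
          ring
      _ = ∑ x ∈ Ω, coord α x * u i x * gam n (coord α) (u i) x * deg n
          - ∑ x ∈ Ω, ∑ j ∈ Finset.Icc 1 k, aCoef n Ω ρ u α i j
              * (u j x * gam n (coord α) (u i) x * deg n) := Finset.sum_sub_distrib _ _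
      _ = ∑ x ∈ Ω, coord α x * u i x * gam n (coord α) (u i) x * deg n
          - ∑ j ∈ Finset.Icc 1 k, aCoef n Ω ρ u α i j * bCoef n Ω u α i j := by
          congr 1
          rw [Finset.sum_comm]
          apply Finset.sum_congr rfl
          intro j _
          rw [bCoef, Finset.mul_sum]
  constructor
  · have hsum2b : ∑ j ∈ Finset.Icc 1 k, 2 * (aCoef n Ω ρ u α i j * bCoef n Ω u α i j)
        = ∑ j ∈ Finset.Icc 1 k, (lam i - lam j) * (aCoef n Ω ρ u α i j) ^ 2 := by
      apply Finset.sum_congr rfl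
      intro j hj
      have h2b := hb i hiN j (hsubk j hj)
      linear_combination (aCoef n Ω ρ u α i j) * h2b
    calc -2 * S
        = -2 * ∑ x ∈ Ω, coord α x * u i x * gam n (coord α) (u i) x * deg n
          + 2 * ∑ j ∈ Finset.Icc 1 k, aCoef n Ω ρ u α i j * bCoef n Ω u α i j := by
          rw [hSplit]; ring
      _ = -2 * ∑ x ∈ Ω, coord α x * u i x * gam n (coord α) (u i) x * deg n
          + ∑ j ∈ Finset.Icc 1 k, 2 * (aCoef n Ω ρ u α i j * bCoef n Ω u α i j) := by
          congr 1
          exact Finset.mul_sum _ _ _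
      _ = -2 * ∑ x ∈ Ω, coord α x * u i x * gam n (coord α) (u i) x * deg n
          + ∑ j ∈ Finset.Icc 1 k, (lam i - lam j) * (aCoef n Ω ρ u α i j) ^ 2 := by
          rw [hsum2b]
  · -- nonnegativity
    have hmain : -2 * S = ∑ m ∈ Finset.Icc 1 N, c m * ((lam m - lam i) * aCoef n Ω ρ u α i m) := by
      rw [hS, Finset.mul_sum]
      apply Finset.sum_congr rfl
      intro m hm
      have h2b := hb i hiN m hm
      linear_combination (-(c m)) * h2b
    rw [hmain]
    apply Finset.sum_nonneg
    intro m hm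
    by_cases hmk : m ∈ Finset.Icc 1 k
    · rw [hc m hm, if_pos hmk, sub_self, zero_mul]
    · rw [hc m hm, if_neg hmk, sub_zero]
      have hm' := Finset.mem_Icc.mp hm
      have hmk' := Finset.mem_Icc.not.mp hmk
      have him : i ≤ m := by omega
      have hlm := hmono i m hi1 him hm'.2
      nlinarith [sq_nonneg (aCoef n Ω ρ u α i m)]
end

section
/- If real numbers 0 < λ_1 ≤ ⋯ ≤ λ_{k+1} satisfy the Yang-type inequality Σ_{i=1}^k (λ_{k+1} − λ_i)( λ_{k+1}(c − s λ_i) − λ_i(c − s λ_i + 4/n) ) ≤ 0 with constants c, s > 0 (c = ρ_min/ρ_max, s = ρ_min), then they also satisfy the averaged quadratic inequality obtained by applying Cauchy–Schwarz/Chebyshev-type summation, namely the Hile–Protter form Σ_{i=1}^k λ_i/(λ_{k+1} − λ_i) ≥ (nk/4)( c − (s/k) Σ_{i=1}^k λ_i ), provided λ_{k+1} > λ_k. -/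
open Finset

/-- Abstract implication Yang 1 ⇒ Hile–Protter at the level of real sequences:
if `0 < λ₁ ≤ ⋯ ≤ λ_k < λ_{k+1}` satisfy the Yang-type inequality with constants
`c = ρ_min/ρ_max ∈ (0,1]` and `s = ρ_min > 0`, then they satisfy the
Hile–Protter form. -/
theorem yang_implies_hile_protter (n : ℕ) (hn : 0 < n) (k : ℕ) (hk : 1 ≤ k)
    (lam : ℕ → ℝ) (hpos : 0 < lam 1)
    (hmono : ∀ i j : ℕ, 1 ≤ i → i ≤ j → j ≤ k + 1 → lam i ≤ lam j)
    (hgap : lam k < lam (k + 1))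
    (c s : ℝ) (hc0 : 0 < c) (hc1 : c ≤ 1) (hs : 0 < s)
    (hyang : ∑ i ∈ Finset.Icc 1 k, (lam (k + 1) - lam i) *
        (lam (k + 1) * (c - s * lam i) - lam i * (c - s * lam i + 4 / n)) ≤ 0) :
    ∑ i ∈ Finset.Icc 1 k, lam i / (lam (k + 1) - lam i)
      ≥ ((n : ℝ) * k / 4) * (c - (s / k) * ∑ i ∈ Finset.Icc 1 k, lam i) := by
  have hn' : (0 : ℝ) < n := by exact_mod_cast hn
  have hk' : (0 : ℝ) < k := by exact_mod_cast hk
  set Λ := lam (k + 1) with hΛ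
  have hlampos : ∀ i ∈ Finset.Icc 1 k, 0 < lam i := by
    intro i hi
    rw [Finset.mem_Icc] at hi
    exact lt_of_lt_of_le hpos (hmono 1 i le_rfl hi.1 (hi.2.trans (Nat.le_succ k)))
  have ha : ∀ i ∈ Finset.Icc 1 k, 0 < Λ - lam i := by
    intro i hi
    rw [Finset.mem_Icc] at hi
    have : lam i ≤ lam k := hmono i k hi.1 hi.2 (Nat.le_succ k)
    have := this.trans_lt hgap
    linarith
  -- order fact
  have horder : ∀ i ∈ Finset.Icc 1 k, ∀ j ∈ Finset.Icc 1 k, lam i ≤ lam j ∨ lam j ≤ lam i := by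
    intro i hi j hj
    rw [Finset.mem_Icc] at hi hj
    rcases le_total i j with h | h
    · exact Or.inl (hmono i j hi.1 h (hj.2.trans (Nat.le_succ k)))
    · exact Or.inr (hmono j i hj.1 h (hi.2.trans (Nat.le_succ k)))
  set f : ℕ → ℝ := fun i => (Λ - lam i) ^ 2 with hf
  set g : ℕ → ℝ := fun i => c - s * lam i with hg
  set g' : ℕ → ℝ := fun i => lam i / (Λ - lam i) with hg'
  have hmonov : MonovaryOn f g (Finset.Icc 1 k) := by
    intro i hi j hj hij
    have hij' : lam j < lam i := by
      simp only [hg] at hij; nlinarith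
    have hji : lam j ≤ lam i := hij'.le
    have h1 : 0 < Λ - lam i := ha i hi
    have h2 : Λ - lam i ≤ Λ - lam j := by linarith
    simp only [hf]
    nlinarith
  have hantiv : AntivaryOn f g' (Finset.Icc 1 k) := by
    intro i hi j hj hij
    have hij' : lam i < lam j := by
      by_contra h
      push_neg at h
      have h1 : 0 < Λ - lam i := ha i hi
      have h2 : Λ - lam i ≤ Λ - lam j := by linarith
      have : lam j / (Λ - lam j) ≤ lam i / (Λ - lam i) :=
        div_le_div₀ (hlampos i hi).le h h1 h2
      simp only [hg'] at hij
      linarith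
    have h1 : 0 < Λ - lam j := ha j hj
    have h2 : Λ - lam j ≤ Λ - lam i := by linarith
    simp only [hf]
    nlinarith
  have hcard : (#(Finset.Icc 1 k) : ℝ) = k := by
    rw [Nat.card_Icc]; push_cast; ring
  set A := ∑ i ∈ Finset.Icc 1 k, f i with hA
  set S := ∑ i ∈ Finset.Icc 1 k, g i with hS
  set T := ∑ i ∈ Finset.Icc 1 k, g' i with hT
  set L := ∑ i ∈ Finset.Icc 1 k, (Λ - lam i) * lam i with hL
  -- Yang rearranged
  have hyang' : ∑ i ∈ Finset.Icc 1 k, f i * g i ≤ (4 / n) * L := by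
    have heq : ∑ i ∈ Finset.Icc 1 k, (Λ - lam i) *
        (Λ * (c - s * lam i) - lam i * (c - s * lam i + 4 / n))
        = ∑ i ∈ Finset.Icc 1 k, f i * g i - (4 / n) * L := by
      rw [hL, Finset.mul_sum, ← Finset.sum_sub_distrib]
      refine Finset.sum_congr rfl fun i hi => ?_
      simp only [hf, hg]; ring
    rw [heq] at hyang
    linarith
  -- Chebyshev 1
  have hcheb1 : A * S ≤ (k : ℝ) * ∑ i ∈ Finset.Icc 1 k, f i * g i := by
    have := hmonov.sum_mul_sum_le_card_mul_sum
    rwa [hcard] at this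
  -- Chebyshev 2
  have hcheb2 : (k : ℝ) * L ≤ A * T := by
    have := hantiv.card_mul_sum_le_sum_mul_sum
    rw [hcard] at this
    have heq : ∑ i ∈ Finset.Icc 1 k, f i * g' i = L := by
      refine Finset.sum_congr rfl fun i hi => ?_
      have h1 : Λ - lam i ≠ 0 := (ha i hi).ne'
      simp only [hf, hg']
      field_simp
    rwa [heq] at this
  -- rewrite the goal RHS
  have hSrw : S = k * c - s * ∑ i ∈ Finset.Icc 1 k, lam i := by
    rw [hS, hg]
    rw [Finset.sum_sub_distrib, Finset.sum_const, Nat.card_Icc, ← Finset.mul_sum]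
    push_cast; ring
  have hgoal : ((n : ℝ) * k / 4) * (c - (s / k) * ∑ i ∈ Finset.Icc 1 k, lam i)
      = (n / 4) * S := by
    rw [hSrw]
    field_simp
  rw [ge_iff_le, hgoal]
  have hTnn : 0 ≤ T := by
    refine Finset.sum_nonneg fun i hi => ?_
    exact div_nonneg (hlampos i hi).le (ha i hi).le
  rcases le_or_gt S 0 with hS0 | hS0
  · have : (n / 4 : ℝ) * S ≤ 0 := mul_nonpos_of_nonneg_of_nonpos (by positivity) hS0
    linarith
  · have hApos : 0 < A := by
      refine Finset.sum_pos (fun i hi => ?_) ⟨1, Finset.mem_Icc.mpr ⟨le_rfl, hk⟩⟩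
      exact pow_pos (ha i hi) 2
    have h4n : (0 : ℝ) ≤ 4 / n := by positivity
    have hchain : A * S ≤ A * ((4 / n) * T) := by
      calc A * S ≤ (k : ℝ) * ∑ i ∈ Finset.Icc 1 k, f i * g i := hcheb1
        _ ≤ (k : ℝ) * ((4 / n) * L) := by
            exact mul_le_mul_of_nonneg_left hyang' hk'.le
        _ = (4 / n) * ((k : ℝ) * L) := by ring
        _ ≤ (4 / n) * (A * T) := mul_le_mul_of_nonneg_left hcheb2 h4n
        _ = A * ((4 / n) * T) := by ring
    have hST : S ≤ (4 / n) * T := le_of_mul_le_mul_left hchain hApos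
    calc (n / 4 : ℝ) * S ≤ (n / 4) * ((4 / n) * T) :=
          mul_le_mul_of_nonneg_left hST (by positivity)
      _ = T := by field_simp
end
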